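/- arXiv:1705.03046 — 2 statements merged into one kernel-verified Lean document; each statement's English description precedes it below -/
import Mathlib

section
/- For a bounded open set Ω ⊂ ℝⁿ with inradius r_Ω, the infimum of the Lipschitz constants of functions u : Ω̄ → ℝ vanishing on ∂Ω with sup_Ω |u| = 1 equals 1/r_Ω, and it is attained by u(x) = dist(x, ∂Ω)/r_Ω. -/
open Metric

/-- For a bounded open nonempty `Ω ⊂ ℝⁿ` with inradius `rΩ > 0`, the value `1/rΩ` is the
least Lipschitz constant among functions on `closure Ω` vanishing on `∂Ω` with
`sup_Ω |u| = 1`; it is attained by `u x = infDist x (frontier Ω) / rΩ`. -/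
theorem stmt10 (n : ℕ) (Ω : Set (EuclideanSpace ℝ (Fin n)))
    (hΩopen : IsOpen Ω) (hΩbdd : Bornology.IsBounded Ω) (hΩne : Ω.Nonempty)
    (rΩ : ℝ) (hrΩ : rΩ = ⨆ x ∈ Ω, infDist x (frontier Ω)) (hrΩpos : 0 < rΩ) :
    IsLeast
      {L : ℝ | 0 ≤ L ∧
        ∃ u : EuclideanSpace ℝ (Fin n) → ℝ,
          LipschitzOnWith (Real.toNNReal L) u (closure Ω) ∧
          (∀ x ∈ frontier Ω, u x = 0) ∧
          (⨆ x ∈ Ω, |u x|) = 1}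
      (1 / rΩ) ∧
    LipschitzOnWith (Real.toNNReal (1 / rΩ))
      (fun x => infDist x (frontier Ω) / rΩ) (closure Ω) ∧
    (∀ x ∈ frontier Ω, infDist x (frontier Ω) / rΩ = 0) ∧
    (⨆ x ∈ Ω, |infDist x (frontier Ω) / rΩ|) = 1 := by
  set F := frontier Ω with hF
  -- frontier is nonempty
  have hFne : F.Nonempty := by
    by_contra h
    rw [Set.not_nonempty_iff_eq_empty] at h
    have : rΩ = 0 := by
      rw [hrΩ, h]
      simp [infDist_empty, Real.iSup_const_zero]
    linarith
  -- frontier is compact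
  have hFclosed : IsClosed F := isClosed_frontier
  have hFbdd : Bornology.IsBounded F :=
    hΩbdd.closure.subset frontier_subset_closure
  have hFcpt : IsCompact F := Metric.isCompact_of_isClosed_isBounded hFclosed hFbdd
  -- every point of Ω has infDist at most rΩ
  obtain ⟨y₀, hy₀⟩ := id hFne
  obtain ⟨R, hR⟩ := hΩbdd.subset_closedBall y₀
  have hbdd : BddAbove (Set.range fun x => ⨆ _ : x ∈ Ω, infDist x F) := by
    refine ⟨max R 0, ?_⟩
    rintro _ ⟨x, rfl⟩
    refine Real.iSup_le (fun hx => ?_) (le_max_right _ _)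
    exact le_trans (infDist_le_dist_of_mem hy₀)
      (le_trans (hR hx) (le_max_left _ _))
  have hle : ∀ x ∈ Ω, infDist x F ≤ rΩ := by
    intro x hx
    rw [hrΩ]
    refine le_trans ?_ (le_ciSup hbdd x)
    rw [ciSup_pos hx]
  -- the Lipschitz property
  have hlip : LipschitzOnWith (Real.toNNReal (1 / rΩ))
      (fun x => infDist x F / rΩ) (closure Ω) := by
    have hw : LipschitzWith (Real.toNNReal (1 / rΩ)) (fun x => infDist x F / rΩ) := by
      apply LipschitzWith.of_dist_le_mul
      intro x y
      have h := (lipschitz_infDist_pt (s := F)).dist_le_mul x y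
      simp only [NNReal.coe_one, one_mul] at h
      rw [Real.dist_eq] at h
      rw [Real.dist_eq, div_sub_div_same, abs_div, abs_of_pos hrΩpos,
        Real.coe_toNNReal _ (by positivity)]
      calc |infDist x F - infDist y F| / rΩ ≤ dist x y / rΩ := by gcongr
        _ = 1 / rΩ * dist x y := by ring
    exact hw.lipschitzOnWith
  -- vanishing on the frontier
  have hvanish : ∀ x ∈ F, infDist x F / rΩ = 0 := by
    intro x hx
    rw [infDist_zero_of_mem hx, zero_div]
  -- the sup condition
  have hsup : (⨆ x ∈ Ω, |infDist x F / rΩ|) = 1 := by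
    have h1 : ∀ x, |infDist x F / rΩ| = infDist x F / rΩ := fun x =>
      abs_of_nonneg (div_nonneg infDist_nonneg hrΩpos.le)
    simp only [h1]
    have h2 : (⨆ x ∈ Ω, infDist x F / rΩ) = (⨆ x ∈ Ω, infDist x F) / rΩ := by
      simp only [div_eq_mul_inv,
        ← Real.iSup_mul_of_nonneg (inv_nonneg.2 hrΩpos.le)]
    rw [h2, ← hrΩ, div_self hrΩpos.ne']
  refine ⟨⟨⟨by positivity, fun x => infDist x F / rΩ, hlip, hvanish, hsup⟩, ?_⟩,
    hlip, hvanish, hsup⟩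
  -- lower bound
  rintro L ⟨hL0, u, hLip, hu0, husup⟩
  rw [div_le_iff₀ hrΩpos]
  have key : ∀ x ∈ Ω, |u x| ≤ L * rΩ := by
    intro x hx
    obtain ⟨y, hyF, hxy⟩ := hFcpt.exists_infDist_eq_dist hFne x
    have hdist := hLip.dist_le_mul x (subset_closure hx) y
      (frontier_subset_closure hyF)
    rw [hu0 y hyF, Real.dist_eq, sub_zero, Real.coe_toNNReal _ hL0] at hdist
    calc |u x| ≤ L * dist x y := hdist
      _ = L * infDist x F := by rw [hxy]
      _ ≤ L * rΩ := mul_le_mul_of_nonneg_left (hle x hx) hL0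
  have : (⨆ x ∈ Ω, |u x|) ≤ L * rΩ :=
    Real.iSup_le (fun x => Real.iSup_le (fun hx => key x hx)
      (mul_nonneg hL0 hrΩpos.le)) (mul_nonneg hL0 hrΩpos.le)
  rwa [husup] at this
end

section
/- Let E = {x ∈ ℝⁿ : Σᵢ (xᵢ/aᵢ)² < 1} be an open ellipsoid with semi-axes a₁, …, aₙ > 0. Then the inradius of E (the supremum over x ∈ E of dist(x, ∂E)) equals minᵢ aᵢ. -/
open Metric

/-- The inradius of the open ellipsoid with semi-axes `a₁, …, aₙ > 0` equals
`minᵢ aᵢ`. -/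
theorem stmt14 (n : ℕ) (hn : 0 < n) (a : Fin n → ℝ) (ha : ∀ i, 0 < a i) :
    haveI : Nonempty (Fin n) := Fin.pos_iff_nonempty.mp hn
    (⨆ x ∈ {x : EuclideanSpace ℝ (Fin n) | ∑ i, (x i / a i) ^ 2 < 1},
        infDist x {x : EuclideanSpace ℝ (Fin n) | ∑ i, (x i / a i) ^ 2 < 1}ᶜ)
      = ⨅ i, a i := by
  haveI : Nonempty (Fin n) := Fin.pos_iff_nonempty.mp hn
  set E : Set (EuclideanSpace ℝ (Fin n)) :=
    {x : EuclideanSpace ℝ (Fin n) | ∑ i, (x i / a i) ^ 2 < 1} with hEdef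
  show (⨆ x ∈ E, infDist x Eᶜ) = ⨅ i, a i
  obtain ⟨j, -, hj⟩ := Finset.exists_min_image Finset.univ a
    ⟨Classical.arbitrary _, Finset.mem_univ _⟩
  have hj' : ∀ i, a j ≤ a i := fun i => hj i (Finset.mem_univ i)
  have hm : (⨅ i, a i) = a j :=
    le_antisymm (ciInf_le (Finite.bddBelow_range a) j) (le_ciInf hj')
  have haj : 0 < a j := ha j
  -- 0 ∈ E
  have h0E : (0 : EuclideanSpace ℝ (Fin n)) ∈ E := by
    simp [hEdef]
  -- upper bound: for x ∈ E, infDist x Eᶜ ≤ a j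
  have hub : ∀ x ∈ E, infDist x Eᶜ ≤ a j := by
    intro x hx
    have hxj : (x j / a j) ^ 2 < 1 := by
      refine lt_of_le_of_lt ?_ hx
      exact Finset.single_le_sum (fun i _ => sq_nonneg ((x i) / a i)) (Finset.mem_univ j)
    have hsq : (x j) ^ 2 < (a j) ^ 2 := by
      have := hxj
      rw [div_pow] at this
      calc (x j) ^ 2 = (x j) ^ 2 / (a j) ^ 2 * (a j) ^ 2 := by
            field_simp
        _ < 1 * (a j) ^ 2 := by
            exact mul_lt_mul_of_pos_right this (by positivity)
        _ = (a j) ^ 2 := one_mul _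
    have hxabs : |x j| < a j := by
      cases abs_cases (x j) with
      | inl h => nlinarith [h.1, h.2]
      | inr h => nlinarith [h.1, h.2]
    -- the boundary point
    set c : ℝ := if 0 ≤ x j then a j else -a j with hc
    set y : EuclideanSpace ℝ (Fin n) := WithLp.toLp 2 (fun i => if i = j then c else x i) with hy
    have hyj : y j = c := by simp [hy]
    have hyi : ∀ i, i ≠ j → y i = x i := fun i h => by simp [hy, h]
    have hc2 : c ^ 2 = (a j) ^ 2 := by
      rw [hc]; split <;> ring
    have hyE : y ∈ Eᶜ := by
      intro hyE
      have h1 : (y j / a j) ^ 2 = 1 := by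
        rw [hyj, div_pow, hc2, div_self (by positivity)]
      have h2 : (y j / a j) ^ 2 ≤ ∑ i, (y i / a i) ^ 2 :=
        Finset.single_le_sum (fun i _ => sq_nonneg ((y i) / a i)) (Finset.mem_univ j)
      have : (1 : ℝ) < 1 := lt_of_le_of_lt (h1 ▸ h2) hyE
      exact lt_irrefl _ this
    have hdist : dist x y = |x j - c| := by
      rw [EuclideanSpace.dist_eq]
      have hz : ∀ i ∈ Finset.univ, i ≠ j → dist (x i) (y i) ^ 2 = 0 := by
        intro i _ h
        rw [hyi i h, dist_self]; ring
      rw [Finset.sum_eq_single j (fun i _ h => hz i (Finset.mem_univ i) h)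
        (fun h => absurd (Finset.mem_univ j) h)]
      rw [hyj, Real.dist_eq, sq_abs, Real.sqrt_sq_eq_abs]
    have hdle : dist x y ≤ a j := by
      rw [hdist, hc]
      split
      · rename_i h
        rw [abs_le]
        constructor <;> nlinarith [abs_nonneg (x j), le_abs_self (x j), neg_abs_le (x j)]
      · rename_i h
        push_neg at h
        rw [abs_le]
        constructor <;> nlinarith [neg_abs_le (x j), le_abs_self (x j)]
    exact le_trans (infDist_le_dist_of_mem hyE) hdle
  -- Eᶜ is nonempty
  have hEc_ne : (Eᶜ : Set (EuclideanSpace ℝ (Fin n))).Nonempty := by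
    set z : EuclideanSpace ℝ (Fin n) := WithLp.toLp 2 (fun i => if i = j then a j else 0) with hz
    refine ⟨z, ?_⟩
    intro hzE
    have h1 : (z j / a j) ^ 2 = 1 := by
      simp [hz, div_self haj.ne']
    have h2 : (z j / a j) ^ 2 ≤ ∑ i, (z i / a i) ^ 2 :=
      Finset.single_le_sum (fun i _ => sq_nonneg ((z i) / a i)) (Finset.mem_univ j)
    exact lt_irrefl (1 : ℝ) (lt_of_le_of_lt (h1 ▸ h2) hzE)
  -- lower bound: a j ≤ infDist 0 Eᶜ
  have hlb : a j ≤ infDist (0 : EuclideanSpace ℝ (Fin n)) Eᶜ := by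
    haveI := hEc_ne.to_subtype
    rw [infDist_eq_iInf]
    refine le_ciInf fun yy => ?_
    obtain ⟨y, hyE⟩ := yy
    show a j ≤ dist 0 y
    have h1 : (1 : ℝ) ≤ ∑ i, (y i / a i) ^ 2 := not_lt.mp hyE
    have h2 : ∑ i, (y i / a i) ^ 2 ≤ ∑ i, (y i) ^ 2 / (a j) ^ 2 := by
      refine Finset.sum_le_sum fun i _ => ?_
      rw [div_pow]
      apply div_le_div_of_nonneg_left (sq_nonneg _) (by positivity)
      exact pow_le_pow_left₀ haj.le (hj' i) 2
    have h3 : (a j) ^ 2 ≤ ∑ i, (y i) ^ 2 := by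
      have : (1 : ℝ) ≤ (∑ i, (y i) ^ 2) / (a j) ^ 2 := by
        rw [Finset.sum_div]
        exact le_trans h1 h2
      calc (a j) ^ 2 = 1 * (a j) ^ 2 := (one_mul _).symm
        _ ≤ (∑ i, (y i) ^ 2) / (a j) ^ 2 * (a j) ^ 2 :=
            mul_le_mul_of_nonneg_right this (by positivity)
        _ = ∑ i, (y i) ^ 2 := by field_simp
    rw [EuclideanSpace.dist_eq]
    have hsum : ∑ i, dist ((0 : EuclideanSpace ℝ (Fin n)) i) (y i) ^ 2 = ∑ i, (y i) ^ 2 := by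
      refine Finset.sum_congr rfl fun i _ => ?_
      simp [Real.dist_eq, sq_abs]
    rw [hsum]
    exact (Real.le_sqrt haj.le (Finset.sum_nonneg fun i _ => sq_nonneg _)).mpr h3
  -- bddAbove
  have hbdd : BddAbove (Set.range fun x => ⨆ _ : x ∈ E, infDist x Eᶜ) := by
    refine ⟨a j, ?_⟩
    rintro _ ⟨x, rfl⟩
    exact Real.iSup_le (fun hx => hub x hx) haj.le
  rw [hm]
  apply le_antisymm
  · exact Real.iSup_le (fun x => Real.iSup_le (fun hx => hub x hx) haj.le) haj.le
  · refine le_ciSup_of_le hbdd 0 ?_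
    rw [ciSup_pos h0E]
    exact hlb
end
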